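/- Let a, b ≥ 1 and μ ≥ 1 be natural numbers with μ ≤ M (M a natural number, M ≥ 1), and let X, Y be positive semidefinite n×n real matrices. Then |X^{a/2} Y^{μ} X^{b/2}|_{M/μ} ≤ ‖X‖^{(a+b)/2 − μ/M} · (tr(X Y^{M}))^{μ/M}, where |·|_{M/μ} denotes the Schatten (M/μ)-norm and real powers of positive semidefinite matrices are taken via the functional calculus. -/

import Mathlib

open MeasureTheory ProbabilityTheory
open scoped Classical

noncomputable section

/-- The ℓ²→ℓ² operator norm of a real square matrix. -/
def opNorm {n : ℕ} (A : Matrix (Fin n) (Fin n) ℝ) : ℝ :=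
  ‖(Matrix.toEuclideanCLM (𝕜 := ℝ) A : EuclideanSpace ℝ (Fin n) →L[ℝ] EuclideanSpace ℝ (Fin n))‖

/-- The entrywise (Bochner) expectation of a random matrix. -/
def matExp {Ω : Type*} [MeasurableSpace Ω] (μ : Measure Ω) {n : ℕ}
    (X : Ω → Matrix (Fin n) (Fin n) ℝ) : Matrix (Fin n) (Fin n) ℝ :=
  Matrix.of fun i j => ∫ ω, X ω i j ∂μ

instance matMS {n : ℕ} : MeasurableSpace (Matrix (Fin n) (Fin n) ℝ) :=
  (inferInstance : MeasurableSpace (Fin n → Fin n → ℝ))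

/-- Real power of a positive semidefinite matrix via the spectral decomposition
(continuous functional calculus); junk value `A` if `A` is not positive semidefinite. -/

def psdRpow {n : ℕ} (A : Matrix (Fin n) (Fin n) ℝ) (t : ℝ) : Matrix (Fin n) (Fin n) ℝ :=
  if hA : A.PosSemidef then
    (hA.1.eigenvectorUnitary : Matrix (Fin n) (Fin n) ℝ)
      * Matrix.diagonal (fun i => (hA.1.eigenvalues i) ^ t)
      * star (hA.1.eigenvectorUnitary : Matrix (Fin n) (Fin n) ℝ)
  else A

/-- The absolute value `|M| = (Mᵀ M)^{1/2}` of a real square matrix. -/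
def matAbs {n : ℕ} (M : Matrix (Fin n) (Fin n) ℝ) : Matrix (Fin n) (Fin n) ℝ :=
  (Matrix.posSemidef_conjTranspose_mul_self M).1.eigenvectorUnitary.1
    * Matrix.diagonal (fun i => Real.sqrt ((Matrix.posSemidef_conjTranspose_mul_self M).1.eigenvalues i))
    * (star (Matrix.posSemidef_conjTranspose_mul_self M).1.eigenvectorUnitary : Matrix (Fin n) (Fin n) ℝ)

/-- The Schatten `q`-norm of a real square matrix: `(tr(|M|^q))^{1/q}`. -/
def schattenNorm {n : ℕ} (q : ℝ) (M : Matrix (Fin n) (Fin n) ℝ) : ℝ :=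
  (Matrix.trace (psdRpow (matAbs M) q)) ^ (1 / q)

end

noncomputable section
namespace SFL

open Matrix Polynomial

variable {n : ℕ}


lemma charmatrix_diagonal (d : Fin n → ℝ) :
    charmatrix (Matrix.diagonal d) = Matrix.diagonal (fun i => (X : ℝ[X]) - C (d i)) := by
  ext i j
  by_cases h : i = j
  · subst h; simp
  · simp [h, Matrix.charmatrix_apply_ne _ _ _ h, Matrix.diagonal_apply_ne _ h]

lemma charpoly_diagonal (d : Fin n → ℝ) :
    (Matrix.diagonal d).charpoly = ∏ i, ((X : ℝ[X]) - C (d i)) := by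
  rw [Matrix.charpoly, charmatrix_diagonal, Matrix.det_diagonal]

lemma roots_charpoly_diagonal (d : Fin n → ℝ) :
    (Matrix.diagonal d).charpoly.roots = Finset.univ.val.map d := by
  rw [charpoly_diagonal, Finset.prod_eq_multiset_prod]
  have : Multiset.map (fun i => (X : ℝ[X]) - C (d i)) Finset.univ.val
      = Multiset.map (fun a => (X : ℝ[X]) - C a) (Multiset.map d Finset.univ.val) := by
    rw [Multiset.map_map]; rfl
  rw [this, Polynomial.roots_multiset_prod_X_sub_C]

/-- charpoly is invariant under conjugation `U * A * V` with `U * V = 1`. -/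
lemma charpoly_conj {R : Type*} [CommRing R] {N : Type*} [Fintype N] [DecidableEq N]
    (U A V : Matrix N N R) (h : U * V = 1) :
    (U * A * V).charpoly = A.charpoly := by
  have h' : V * U = 1 := mul_eq_one_comm.mp h
  have key1 : (C : R →+* R[X]).mapMatrix U * Matrix.scalar N (X : R[X])
      * (C : R →+* R[X]).mapMatrix V = Matrix.scalar N (X : R[X]) := by
    rw [Matrix.scalar_apply, ← Matrix.smul_one_eq_diagonal, mul_smul_comm, smul_mul_assoc,
      mul_one, ← _root_.map_mul, h, _root_.map_one]
  have key2 : (C : R →+* R[X]).mapMatrix U * (C : R →+* R[X]).mapMatrix A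
      * (C : R →+* R[X]).mapMatrix V = (C : R →+* R[X]).mapMatrix (U * A * V) := by
    rw [← _root_.map_mul, ← _root_.map_mul]
  have hcm : (C : R →+* R[X]).mapMatrix U * charmatrix A * (C : R →+* R[X]).mapMatrix V
      = charmatrix (U * A * V) := by
    unfold charmatrix
    rw [mul_sub, sub_mul, key2, key1]
  have hdet : ((C : R →+* R[X]).mapMatrix U).det * ((C : R →+* R[X]).mapMatrix V).det = 1 := by
    rw [← Matrix.det_mul, ← _root_.map_mul, h, _root_.map_one, Matrix.det_one]
  rw [Matrix.charpoly, Matrix.charpoly, ← hcm, Matrix.det_mul, Matrix.det_mul,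
    mul_right_comm, hdet, one_mul]

/-- AB and BA have the same charpoly (over ℝ). -/
lemma charpoly_mul_comm (A B : Matrix (Fin n) (Fin n) ℝ) :
    (A * B).charpoly = (B * A).charpoly := by
  set R' := Polynomial ℝ
  let K := FractionRing R'
  let ψ : R' →+* K := algebraMap R' K
  have hψ : Function.Injective ψ := IsFractionRing.injective R' K
  set A₀ : Matrix (Fin n) (Fin n) R' := charmatrix (-A) with hA₀
  set B₀ : Matrix (Fin n) (Fin n) R' := (C : ℝ →+* R').mapMatrix B with hB₀
  have hdet : IsUnit (A₀.map ψ).det := by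
    have h1 : (A₀.map ψ).det = ψ A₀.det := by
      rw [RingHom.map_det, RingHom.mapMatrix_apply]
    have h2 : A₀.det = (-A).charpoly := rfl
    rw [h1, h2]
    apply isUnit_iff_ne_zero.mpr
    intro hcon
    exact (Matrix.charpoly_monic (-A)).ne_zero (hψ (by rw [hcon, map_zero]))
  have main : (A₀ * B₀).charpoly = (B₀ * A₀).charpoly := by
    apply Polynomial.map_injective ψ hψ
    rw [← Matrix.charpoly_map, ← Matrix.charpoly_map, Matrix.map_mul, Matrix.map_mul]
    have h1 : (A₀.map ψ)⁻¹ * (A₀.map ψ * B₀.map ψ) * A₀.map ψ = B₀.map ψ * A₀.map ψ := by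
      rw [← mul_assoc, Matrix.nonsing_inv_mul _ hdet, one_mul]
    rw [← h1, charpoly_conj _ _ _ (Matrix.nonsing_inv_mul _ hdet)]
  have hev0A : A₀.map (Polynomial.evalRingHom (0:ℝ)) = A := by
    ext i j
    by_cases h : i = j
    · subst h; simp [hA₀, Matrix.map_apply]
    · simp [hA₀, Matrix.map_apply, Matrix.charmatrix_apply_ne _ _ _ h]
  have hev0B : B₀.map (Polynomial.evalRingHom (0:ℝ)) = B := by
    ext i j; simp [hB₀, Matrix.map_apply]
  have h2 := congrArg (Polynomial.map (Polynomial.evalRingHom (0:ℝ))) main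
  rwa [← Matrix.charpoly_map, ← Matrix.charpoly_map, Matrix.map_mul, Matrix.map_mul,
    hev0A, hev0B] at h2


lemma ofReal_comp (f : Fin n → ℝ) : (RCLike.ofReal ∘ f : Fin n → ℝ) = f := rfl

lemma unitary_mul_star {A : Matrix (Fin n) (Fin n) ℝ} (hA : A.IsHermitian) :
    (hA.eigenvectorUnitary : Matrix (Fin n) (Fin n) ℝ)
      * star (hA.eigenvectorUnitary : Matrix (Fin n) (Fin n) ℝ) = 1 :=
  (Matrix.mem_unitaryGroup_iff).mp (hA.eigenvectorUnitary).2

lemma roots_charpoly_decomp {U : Matrix (Fin n) (Fin n) ℝ} {d : Fin n → ℝ}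
    (hU : U * star U = 1) {A : Matrix (Fin n) (Fin n) ℝ}
    (hA : A = U * Matrix.diagonal d * star U) :
    A.charpoly.roots = Finset.univ.val.map d := by
  rw [hA, charpoly_conj U _ (star U) hU, roots_charpoly_diagonal]

lemma psd_decomp {U : Matrix (Fin n) (Fin n) ℝ} {d : Fin n → ℝ}
    (hd : ∀ i, 0 ≤ d i) {A : Matrix (Fin n) (Fin n) ℝ}
    (hA : A = U * Matrix.diagonal d * star U) : A.PosSemidef := by
  rw [hA, Matrix.star_eq_conjTranspose]
  exact (Matrix.posSemidef_diagonal_iff.mpr hd).mul_mul_conjTranspose_same U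

lemma roots_charpoly_psd {A : Matrix (Fin n) (Fin n) ℝ} (hA : A.PosSemidef) :
    A.charpoly.roots = Finset.univ.val.map hA.1.eigenvalues := by
  refine roots_charpoly_decomp (unitary_mul_star hA.1) ?_
  have := hA.1.spectral_theorem
  rwa [ofReal_comp, Unitary.conjStarAlgAut_apply] at this

lemma sum_rpow_eq_multiset (f : Fin n → ℝ) (s : ℝ) :
    ∑ i, f i ^ s = ((Finset.univ.val.map f).map (· ^ s)).sum := by
  rw [Multiset.map_map, Finset.sum_eq_multiset_sum]
  rfl

lemma trace_psdRpow_eigen {A : Matrix (Fin n) (Fin n) ℝ} (hA : A.PosSemidef) (s : ℝ) :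
    (psdRpow A s).trace = ∑ i, hA.1.eigenvalues i ^ s := by
  rw [psdRpow, dif_pos hA, Matrix.trace_mul_cycle,
    mul_eq_one_comm.mp (unitary_mul_star hA.1), one_mul, Matrix.trace_diagonal]

/-- Master: trace of psdRpow via any unitary diagonalization. -/
lemma trace_psdRpow_decomp {U : Matrix (Fin n) (Fin n) ℝ} {d : Fin n → ℝ}
    (hU : U * star U = 1) (hd : ∀ i, 0 ≤ d i) {A : Matrix (Fin n) (Fin n) ℝ}
    (hA : A = U * Matrix.diagonal d * star U) (s : ℝ) :
    (psdRpow A s).trace = ∑ i, d i ^ s := by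
  have hA0 : A.PosSemidef := psd_decomp hd hA
  rw [trace_psdRpow_eigen hA0, sum_rpow_eq_multiset, sum_rpow_eq_multiset,
    ← roots_charpoly_psd hA0, ← roots_charpoly_decomp hU hA]

lemma trace_psdRpow_congr {A B : Matrix (Fin n) (Fin n) ℝ} (hA : A.PosSemidef)
    (hB : B.PosSemidef) (h : A.charpoly = B.charpoly) (s : ℝ) :
    (psdRpow A s).trace = (psdRpow B s).trace := by
  rw [trace_psdRpow_eigen hA, trace_psdRpow_eigen hB, sum_rpow_eq_multiset,
    sum_rpow_eq_multiset, ← roots_charpoly_psd hA, ← roots_charpoly_psd hB, h]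

lemma psdRpow_posSemidef {X : Matrix (Fin n) (Fin n) ℝ} (hX : X.PosSemidef) (t : ℝ) :
    (psdRpow X t).PosSemidef := by
  rw [psdRpow, dif_pos hX]
  exact psd_decomp (fun i => Real.rpow_nonneg (hX.eigenvalues_nonneg i) t) rfl

lemma conj_mul_conj (U P Q : Matrix (Fin n) (Fin n) ℝ) (h : star U * U = 1) :
    (U * P * star U) * (U * Q * star U) = U * (P * Q) * star U := by
  calc (U * P * star U) * (U * Q * star U)
      = U * P * ((star U * U) * (Q * star U)) := by simp only [mul_assoc]
    _ = U * (P * Q) * star U := by rw [h, one_mul]; simp only [mul_assoc]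

lemma matAbs_psd (Z : Matrix (Fin n) (Fin n) ℝ) : (matAbs Z).PosSemidef := by
  unfold matAbs
  exact psd_decomp (fun i => Real.sqrt_nonneg _) rfl

lemma matAbs_mul_self (Z : Matrix (Fin n) (Fin n) ℝ) : matAbs Z * matAbs Z = Zᴴ * Z := by
  have h := Matrix.posSemidef_conjTranspose_mul_self Z
  have hspec := h.1.spectral_theorem
  rw [ofReal_comp, Unitary.conjStarAlgAut_apply] at hspec
  unfold matAbs
  rw [conj_mul_conj _ _ _ (mul_eq_one_comm.mp (unitary_mul_star h.1)), Matrix.diagonal_mul_diagonal]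
  conv_rhs => rw [hspec]
  congr 2
  congr 1
  funext i
  exact Real.mul_self_sqrt (h.eigenvalues_nonneg i)

lemma psdRpow_mul {X : Matrix (Fin n) (Fin n) ℝ} (hX : X.PosSemidef) {t s : ℝ}
    (ht : 0 ≤ t) (hs : 0 ≤ s) :
    psdRpow X t * psdRpow X s = psdRpow X (t + s) := by
  rw [psdRpow, dif_pos hX, psdRpow, dif_pos hX, psdRpow, dif_pos hX,
    conj_mul_conj _ _ _ (mul_eq_one_comm.mp (unitary_mul_star hX.1)),
    Matrix.diagonal_mul_diagonal]
  have : (fun i => hX.1.eigenvalues i ^ t * hX.1.eigenvalues i ^ s)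
      = (fun i => hX.1.eigenvalues i ^ (t + s)) := by
    funext i
    rcases eq_or_ne (t + s) 0 with h0 | h0
    · have ht0 : t = 0 := le_antisymm (by linarith) ht
      have hs0 : s = 0 := le_antisymm (by linarith) hs
      simp [ht0, hs0]
    · rw [Real.rpow_add' (hX.eigenvalues_nonneg i) h0]
  rw [this]

lemma psdRpow_one {X : Matrix (Fin n) (Fin n) ℝ} (hX : X.PosSemidef) :
    psdRpow X 1 = X := by
  rw [psdRpow, dif_pos hX]
  simp only [Real.rpow_one]
  have h := hX.1.spectral_theorem
  rw [ofReal_comp, Unitary.conjStarAlgAut_apply] at h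
  exact h.symm

lemma psdRpow_isHermitian {X : Matrix (Fin n) (Fin n) ℝ} (hX : X.PosSemidef) (t : ℝ) :
    (psdRpow X t).IsHermitian := (psdRpow_posSemidef hX t).1



lemma dot_as_inner (v w : Fin n → ℝ) :
    inner ℝ ((WithLp.equiv 2 (Fin n → ℝ)).symm v) ((WithLp.equiv 2 (Fin n → ℝ)).symm w)
      = v ⬝ᵥ w := by
  simp [PiLp.inner_apply, dotProduct, RCLike.inner_apply, mul_comm]

lemma rayleigh_le_opNorm (A : Matrix (Fin n) (Fin n) ℝ) (v : Fin n → ℝ) :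
    v ⬝ᵥ (A *ᵥ v) ≤ opNorm A * (v ⬝ᵥ v) := by
  set T := (Matrix.toEuclideanCLM (𝕜 := ℝ) A)
  set x : EuclideanSpace ℝ (Fin n) := (WithLp.equiv 2 (Fin n → ℝ)).symm v with hx
  have h1 : T x = (WithLp.equiv 2 (Fin n → ℝ)).symm (A *ᵥ v) := by
    rw [hx]; rfl
  have h2 : inner ℝ x (T x) = v ⬝ᵥ (A *ᵥ v) := by rw [h1, hx, dot_as_inner]
  have h3 : inner ℝ x x = v ⬝ᵥ v := by rw [hx, dot_as_inner]
  calc v ⬝ᵥ (A *ᵥ v) = inner ℝ x (T x) := h2.symm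
    _ ≤ ‖x‖ * ‖T x‖ := real_inner_le_norm x (T x)
    _ ≤ ‖x‖ * (‖T‖ * ‖x‖) := by
        exact mul_le_mul_of_nonneg_left (T.le_opNorm x) (norm_nonneg x)
    _ = ‖T‖ * (‖x‖ * ‖x‖) := by ring
    _ = opNorm A * (v ⬝ᵥ v) := by rw [← real_inner_self_eq_norm_mul_norm, h3]; rfl

lemma eigenvalue_le_opNorm {A : Matrix (Fin n) (Fin n) ℝ} (hA : A.IsHermitian) (i : Fin n) :
    hA.eigenvalues i ≤ opNorm A := by
  set v : Fin n → ℝ := (WithLp.equiv 2 (Fin n → ℝ)) (hA.eigenvectorBasis i) with hv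
  have hmv : A *ᵥ v = hA.eigenvalues i • v := hA.mulVec_eigenvectorBasis i
  have hvv : v ⬝ᵥ v = 1 := by
    have h1 : inner ℝ (hA.eigenvectorBasis i) (hA.eigenvectorBasis i) = 1 := by
      rw [inner_self_eq_norm_sq_to_K]
      rw [hA.eigenvectorBasis.orthonormal.1 i]
      norm_num
    rw [← dot_as_inner v v, hv]
    simp only [Equiv.symm_apply_apply]
    exact h1
  have := rayleigh_le_opNorm A v
  rw [hmv, dotProduct_smul, hvv, smul_eq_mul, mul_one, mul_one] at this
  exact this

lemma opNorm_nonneg (A : Matrix (Fin n) (Fin n) ℝ) : 0 ≤ opNorm A := norm_nonneg _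



/-- the `i`-th eigenvector of a hermitian matrix, as a plain function. -/
def evec {A : Matrix (Fin n) (Fin n) ℝ} (hA : A.IsHermitian) (i : Fin n) : Fin n → ℝ :=
  fun j => (hA.eigenvectorUnitary : Matrix (Fin n) (Fin n) ℝ) j i

lemma evec_dot {A : Matrix (Fin n) (Fin n) ℝ} (hA : A.IsHermitian) (i j : Fin n) :
    evec hA i ⬝ᵥ evec hA j = if i = j then 1 else 0 := by
  have hU' : star (hA.eigenvectorUnitary : Matrix (Fin n) (Fin n) ℝ)
      * (hA.eigenvectorUnitary : Matrix (Fin n) (Fin n) ℝ) = 1 :=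
    mul_eq_one_comm.mp (unitary_mul_star hA)
  have h := congrFun (congrFun hU' i) j
  simpa [Matrix.mul_apply, Matrix.one_apply, evec, dotProduct,
    Matrix.star_apply] using h

lemma coord_eq {A : Matrix (Fin n) (Fin n) ℝ} (hA : A.IsHermitian) (x : Fin n → ℝ) (i : Fin n) :
    (star (hA.eigenvectorUnitary : Matrix (Fin n) (Fin n) ℝ) *ᵥ x) i = evec hA i ⬝ᵥ x := by
  simp [Matrix.mulVec, dotProduct, evec, Matrix.star_apply]

lemma dot_star_mulVec (U : Matrix (Fin n) (Fin n) ℝ) (x w : Fin n → ℝ) :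
    x ⬝ᵥ (U *ᵥ w) = (star U *ᵥ x) ⬝ᵥ w := by
  have h1 : x ᵥ* U = Uᵀ *ᵥ x := by
    have := Matrix.vecMul_transpose Uᵀ x
    rwa [Matrix.transpose_transpose] at this
  rw [dotProduct_mulVec, h1, Matrix.star_eq_conjTranspose,
    Matrix.conjTranspose_eq_transpose_of_trivial]

/-- Quadratic form in eigencoordinates. -/
lemma quad_eigen_expand {A : Matrix (Fin n) (Fin n) ℝ} (hA : A.IsHermitian) (x : Fin n → ℝ) :
    x ⬝ᵥ (A *ᵥ x) = ∑ i, hA.eigenvalues i * (evec hA i ⬝ᵥ x)^2 := by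
  set U := (hA.eigenvectorUnitary : Matrix (Fin n) (Fin n) ℝ) with hUdef
  have hspec := hA.spectral_theorem
  rw [ofReal_comp, Unitary.conjStarAlgAut_apply] at hspec
  conv_lhs => rw [hspec]
  rw [← Matrix.mulVec_mulVec, ← Matrix.mulVec_mulVec, dot_star_mulVec]
  have : ∀ c : Fin n → ℝ, c ⬝ᵥ (Matrix.diagonal hA.eigenvalues *ᵥ c)
      = ∑ i, hA.eigenvalues i * (c i)^2 := by
    intro c
    simp only [dotProduct, Matrix.mulVec_diagonal]
    exact Finset.sum_congr rfl fun i _ => by ring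
  rw [this]
  exact Finset.sum_congr rfl fun i _ => by rw [coord_eq]

lemma norm_eigen_expand {A : Matrix (Fin n) (Fin n) ℝ} (hA : A.IsHermitian) (x : Fin n → ℝ) :
    x ⬝ᵥ x = ∑ i, (evec hA i ⬝ᵥ x)^2 := by
  set U := (hA.eigenvectorUnitary : Matrix (Fin n) (Fin n) ℝ) with hUdef
  set c := star U *ᵥ x with hc
  have hU' : star U * U = 1 := mul_eq_one_comm.mp (unitary_mul_star hA)
  have hx : U *ᵥ c = x := by
    rw [hc, Matrix.mulVec_mulVec, unitary_mul_star hA, Matrix.one_mulVec]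
  have h1 : x ⬝ᵥ x = c ⬝ᵥ c := by
    conv_lhs => rw [← hx]
    rw [dot_star_mulVec, Matrix.mulVec_mulVec, hU', Matrix.one_mulVec]
  rw [h1]
  have : c ⬝ᵥ c = ∑ i, (c i)^2 := by simp [dotProduct, sq]
  rw [this]
  refine Finset.sum_congr rfl fun i _ => ?_
  rw [hc, coord_eq]

lemma evec_li {A : Matrix (Fin n) (Fin n) ℝ} (hA : A.IsHermitian) :
    LinearIndependent ℝ (evec hA) := by
  rw [linearIndependent_iff']
  intro s g hsum j hj
  have hdot : evec hA j ⬝ᵥ (∑ i ∈ s, g i • evec hA i) = g j := by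
    have expand : evec hA j ⬝ᵥ (∑ i ∈ s, g i • evec hA i)
        = ∑ i ∈ s, g i * (evec hA j ⬝ᵥ evec hA i) := by
      simp [dotProduct, Finset.sum_apply, Finset.mul_sum]
      rw [Finset.sum_comm]
      apply Finset.sum_congr rfl; intro i _
      apply Finset.sum_congr rfl; intro k _
      ring
    rw [expand]
    rw [Finset.sum_eq_single j]
    · rw [evec_dot, if_pos rfl, mul_one]
    · intro b _ hbj; rw [evec_dot, if_neg (Ne.symm hbj), mul_zero]
    · intro hjs; exact absurd hj hjs
  rw [hsum, dotProduct_zero] at hdot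
  exact hdot.symm

lemma mem_span_dot_zero {A : Matrix (Fin n) (Fin n) ℝ} (hA : A.IsHermitian)
    {S : Finset (Fin n)} {x : Fin n → ℝ}
    (hx : x ∈ Submodule.span ℝ (Set.range fun i : {i // i ∈ S} => evec hA i))
    {j : Fin n} (hj : j ∉ S) : evec hA j ⬝ᵥ x = 0 := by
  induction hx using Submodule.span_induction with
  | mem y hy =>
    obtain ⟨⟨i, hiS⟩, rfl⟩ := hy
    rw [evec_dot, if_neg]
    rintro rfl; exact hj hiS
  | zero => exact dotProduct_zero _
  | add y z _ _ hy hz => rw [dotProduct_add, hy, hz, add_zero]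
  | smul c y _ hy => rw [dotProduct_smul, hy, smul_zero]

lemma finrank_span_evec {A : Matrix (Fin n) (Fin n) ℝ} (hA : A.IsHermitian)
    (S : Finset (Fin n)) :
    Module.finrank ℝ ↥(Submodule.span ℝ (Set.range fun i : {i // i ∈ S} => evec hA i))
      = S.card := by
  have h := finrank_span_eq_card ((evec_li hA).comp (Subtype.val : {i // i ∈ S} → Fin n)
    Subtype.val_injective)
  simpa [Function.comp_def, Fintype.card_coe] using h

lemma quad_ge_on_span {A : Matrix (Fin n) (Fin n) ℝ} (hA : A.IsHermitian)
    {S : Finset (Fin n)} {r : ℝ} (hr : ∀ i ∈ S, r ≤ hA.eigenvalues i)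
    {x : Fin n → ℝ}
    (hx : x ∈ Submodule.span ℝ (Set.range fun i : {i // i ∈ S} => evec hA i)) :
    r * (x ⬝ᵥ x) ≤ x ⬝ᵥ (A *ᵥ x) := by
  rw [quad_eigen_expand hA, norm_eigen_expand hA, Finset.mul_sum]
  apply Finset.sum_le_sum
  intro i _
  by_cases hiS : i ∈ S
  · exact mul_le_mul_of_nonneg_right (hr i hiS) (sq_nonneg _)
  · rw [mem_span_dot_zero hA hx hiS]
    simp

lemma quad_le_on_span {A : Matrix (Fin n) (Fin n) ℝ} (hA : A.IsHermitian)
    {S : Finset (Fin n)} {r : ℝ} (hr : ∀ i ∈ S, hA.eigenvalues i ≤ r)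
    {x : Fin n → ℝ}
    (hx : x ∈ Submodule.span ℝ (Set.range fun i : {i // i ∈ S} => evec hA i)) :
    x ⬝ᵥ (A *ᵥ x) ≤ r * (x ⬝ᵥ x) := by
  rw [quad_eigen_expand hA, norm_eigen_expand hA, Finset.mul_sum]
  apply Finset.sum_le_sum
  intro i _
  by_cases hiS : i ∈ S
  · exact mul_le_mul_of_nonneg_right (hr i hiS) (sq_nonneg _)
  · rw [mem_span_dot_zero hA hx hiS]
    simp

/-- Weyl monotonicity for sorted eigenvalues. -/
lemma weyl_sorted {A B : Matrix (Fin n) (Fin n) ℝ} (hA : A.IsHermitian) (hB : B.IsHermitian)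
    (hAB : (B - A).PosSemidef) (k : Fin n) :
    hA.eigenvalues (Tuple.sort hA.eigenvalues k) ≤ hB.eigenvalues (Tuple.sort hB.eigenvalues k) := by
  set σA := Tuple.sort hA.eigenvalues
  set σB := Tuple.sort hB.eigenvalues
  set SA : Finset (Fin n) := (Finset.Ici k).image σA with hSA
  set SB : Finset (Fin n) := (Finset.Iic k).image σB with hSB
  set VA := Submodule.span ℝ (Set.range fun i : {i // i ∈ SA} => evec hA i)
  set VB := Submodule.span ℝ (Set.range fun i : {i // i ∈ SB} => evec hB i)
  have hcardA : SA.card = n - k := by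
    rw [hSA, Finset.card_image_of_injective _ σA.injective, Fin.card_Ici]
  have hcardB : SB.card = k + 1 := by
    rw [hSB, Finset.card_image_of_injective _ σB.injective, Fin.card_Iic]
  have hrankA : Module.finrank ℝ ↥VA = n - k := by rw [← hcardA]; exact finrank_span_evec hA SA
  have hrankB : Module.finrank ℝ ↥VB = k + 1 := by rw [← hcardB]; exact finrank_span_evec hB SB
  have hsup : Module.finrank ℝ ↥(VA ⊔ VB) ≤ n := by
    have := Submodule.finrank_le (VA ⊔ VB)
    simpa [Module.finrank_fintype_fun_eq_card] using this
  have hinf : 1 ≤ Module.finrank ℝ ↥(VA ⊓ VB) := by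
    have h2 := Submodule.finrank_sup_add_finrank_inf_eq VA VB
    rw [hrankA, hrankB] at h2
    have hk := k.isLt
    omega
  have hne : VA ⊓ VB ≠ ⊥ := by
    intro hbot
    rw [hbot, finrank_bot] at hinf
    omega
  obtain ⟨x, hxmem, hxne⟩ := Submodule.ne_bot_iff _ |>.mp hne
  have hxA : x ∈ VA := hxmem.1
  have hxB : x ∈ VB := hxmem.2
  have hquadA : hA.eigenvalues (σA k) * (x ⬝ᵥ x) ≤ x ⬝ᵥ (A *ᵥ x) := by
    apply quad_ge_on_span hA _ hxA
    intro i hi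
    rw [hSA, Finset.mem_image] at hi
    obtain ⟨j, hj, rfl⟩ := hi
    rw [Finset.mem_Ici] at hj
    exact Tuple.monotone_sort hA.eigenvalues hj
  have hquadB : x ⬝ᵥ (B *ᵥ x) ≤ hB.eigenvalues (σB k) * (x ⬝ᵥ x) := by
    apply quad_le_on_span hB _ hxB
    intro i hi
    rw [hSB, Finset.mem_image] at hi
    obtain ⟨j, hj, rfl⟩ := hi
    rw [Finset.mem_Iic] at hj
    exact Tuple.monotone_sort hB.eigenvalues hj
  have hmid : x ⬝ᵥ (A *ᵥ x) ≤ x ⬝ᵥ (B *ᵥ x) := by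
    have h0 := hAB.dotProduct_mulVec_nonneg x
    have hstar : star x = x := by
      funext i; simp
    rw [hstar, Matrix.sub_mulVec, dotProduct_sub] at h0
    linarith
  have hnn : 0 ≤ x ⬝ᵥ x := Finset.sum_nonneg fun i _ => mul_self_nonneg _
  have hpos : 0 < x ⬝ᵥ x :=
    lt_of_le_of_ne hnn (fun h => hxne (dotProduct_self_eq_zero.mp h.symm))
  have := hquadA.trans (hmid.trans hquadB)
  exact le_of_mul_le_mul_right this hpos


lemma psdRpow_loewner {X : Matrix (Fin n) (Fin n) ℝ} (hX : X.PosSemidef) {t t' : ℝ}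
    (h0 : 0 ≤ t') (htt : t' ≤ t) :
    (opNorm X ^ (t - t') • psdRpow X t' - psdRpow X t).PosSemidef := by
  rw [psdRpow, dif_pos hX, psdRpow, dif_pos hX]
  set U := (hX.1.eigenvectorUnitary : Matrix (Fin n) (Fin n) ℝ)
  set κ := opNorm X with hκ
  have key : ∀ D D' : Matrix (Fin n) (Fin n) ℝ,
      κ ^ (t - t') • (U * D' * star U) - U * D * star U
        = U * (κ ^ (t - t') • D' - D) * star U := by
    intro D D'
    rw [Matrix.mul_sub, Matrix.sub_mul, mul_smul_comm, smul_mul_assoc]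
  rw [key]
  have hdiag : κ ^ (t - t') • Matrix.diagonal (fun i => hX.1.eigenvalues i ^ t')
      - Matrix.diagonal (fun i => hX.1.eigenvalues i ^ t)
      = Matrix.diagonal
          (fun i => κ ^ (t - t') * hX.1.eigenvalues i ^ t' - hX.1.eigenvalues i ^ t) := by
    rw [← Matrix.diagonal_smul, ← Matrix.diagonal_sub]
    rfl
  rw [hdiag]
  refine psd_decomp (fun i => ?_) rfl
  have hl0 := hX.eigenvalues_nonneg i
  have hlκ := eigenvalue_le_opNorm hX.1 i
  rcases eq_or_lt_of_le htt with rfl | hlt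
  · simp
  · have ht0 : t ≠ 0 := (lt_of_le_of_lt h0 hlt).ne'
    have hsplit : hX.1.eigenvalues i ^ t
        = hX.1.eigenvalues i ^ (t - t') * hX.1.eigenvalues i ^ t' := by
      have h := Real.rpow_add' hl0 (show (t - t') + t' ≠ 0 by
        rw [sub_add_cancel]; exact ht0)
      rw [sub_add_cancel] at h
      exact h
    rw [hsplit, sub_nonneg]
    exact mul_le_mul_of_nonneg_right
      (Real.rpow_le_rpow hl0 hlκ (by linarith)) (Real.rpow_nonneg hl0 t')

lemma trace_psdRpow_smul {A : Matrix (Fin n) (Fin n) ℝ} (hA : A.PosSemidef) {c : ℝ}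
    (hc : 0 ≤ c) (s : ℝ) :
    (psdRpow (c • A) s).trace = c ^ s * (psdRpow A s).trace := by
  set U := (hA.1.eigenvectorUnitary : Matrix (Fin n) (Fin n) ℝ)
  have hdec : c • A = U * Matrix.diagonal (fun i => c * hA.1.eigenvalues i) * star U := by
    have hspec := hA.1.spectral_theorem
    rw [ofReal_comp, Unitary.conjStarAlgAut_apply] at hspec
    have hd : Matrix.diagonal (fun i => c * hA.1.eigenvalues i)
        = c • Matrix.diagonal (hA.1.eigenvalues) := by
      rw [← Matrix.diagonal_smul]; rfl
    rw [hd, mul_smul_comm, smul_mul_assoc, ← hspec]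
  rw [trace_psdRpow_decomp (unitary_mul_star hA.1)
    (fun i => mul_nonneg hc (hA.eigenvalues_nonneg i)) hdec s,
    trace_psdRpow_eigen hA, Finset.mul_sum]
  exact Finset.sum_congr rfl fun i _ => by
    rw [Real.mul_rpow hc (hA.eigenvalues_nonneg i)]

lemma trace_psdRpow_mono {A B : Matrix (Fin n) (Fin n) ℝ} (hA : A.PosSemidef)
    (hB : B.PosSemidef) (hAB : (B - A).PosSemidef) {s : ℝ} (hs : 0 ≤ s) :
    (psdRpow A s).trace ≤ (psdRpow B s).trace := by
  rw [trace_psdRpow_eigen hA, trace_psdRpow_eigen hB,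
    ← Equiv.sum_comp (Tuple.sort hA.1.eigenvalues) (fun i => hA.1.eigenvalues i ^ s),
    ← Equiv.sum_comp (Tuple.sort hB.1.eigenvalues) (fun i => hB.1.eigenvalues i ^ s)]
  apply Finset.sum_le_sum
  intro k _
  exact Real.rpow_le_rpow (hA.eigenvalues_nonneg _) (weyl_sorted hA.1 hB.1 hAB k) hs

lemma jensen_sum {p z : Fin n → ℝ} (hp : ∀ i, 0 ≤ p i) (hz : ∀ i, 0 ≤ z i) {q : ℝ}
    (hq : 1 ≤ q) :
    (∑ i, p i * z i) ^ q ≤ (∑ i, p i) ^ (q - 1) * ∑ i, p i * z i ^ q := by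
  set P := ∑ i, p i with hP
  have hP0 : 0 ≤ P := Finset.sum_nonneg fun i _ => hp i
  have hq0 : (0:ℝ) < q := lt_of_lt_of_le one_pos hq
  rcases eq_or_lt_of_le hP0 with h0 | hpos
  · have hall : ∀ i, p i = 0 := by
      intro i
      have := (Finset.sum_eq_zero_iff_of_nonneg (fun i _ => hp i)).mp h0.symm
      exact this i (Finset.mem_univ i)
    have hz1 : ∑ i, p i * z i = 0 :=
      Finset.sum_eq_zero fun i _ => by rw [hall i, zero_mul]
    rw [hz1, Real.zero_rpow hq0.ne']
    exact mul_nonneg (Real.rpow_nonneg hP0 _)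
      (Finset.sum_nonneg fun i _ => mul_nonneg (hp i) (Real.rpow_nonneg (hz i) q))
  · have hPne : P ≠ 0 := ne_of_gt hpos
    have key := Real.rpow_arith_mean_le_arith_mean_rpow Finset.univ (fun i => p i / P) z
      (fun i _ => div_nonneg (hp i) hP0)
      (by rw [← Finset.sum_div, div_self hPne]) (fun i _ => hz i) hq
    have hL : ∑ i, p i / P * z i = (∑ i, p i * z i) / P := by
      rw [Finset.sum_div]
      exact Finset.sum_congr rfl fun i _ => by ring
    have hR : ∑ i, p i / P * z i ^ q = (∑ i, p i * z i ^ q) / P := by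
      rw [Finset.sum_div]
      exact Finset.sum_congr rfl fun i _ => by ring
    rw [hL, hR, Real.div_rpow (Finset.sum_nonneg fun i _ =>
      mul_nonneg (hp i) (hz i)) hP0] at key
    have hPq : (0:ℝ) < P ^ q := Real.rpow_pos_of_pos hpos q
    calc (∑ i, p i * z i) ^ q
        = ((∑ i, p i * z i) ^ q / P ^ q) * P ^ q := by field_simp
      _ ≤ ((∑ i, p i * z i ^ q) / P) * P ^ q :=
          mul_le_mul_of_nonneg_right key hPq.le
      _ = P ^ (q - 1) * ∑ i, p i * z i ^ q := by
          rw [Real.rpow_sub hpos, Real.rpow_one]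
          field_simp

lemma dot_conj_diag (U : Matrix (Fin n) (Fin n) ℝ) (d : Fin n → ℝ) (g : Fin n → ℝ) :
    g ⬝ᵥ ((U * Matrix.diagonal d * star U) *ᵥ g) = ∑ i, d i * ((star U *ᵥ g) i)^2 := by
  rw [← Matrix.mulVec_mulVec, ← Matrix.mulVec_mulVec, dot_star_mulVec]
  simp only [dotProduct, Matrix.mulVec_diagonal]
  exact Finset.sum_congr rfl fun i _ => by ring

lemma conj_pow (U D : Matrix (Fin n) (Fin n) ℝ) (hU : U * star U = 1) (k : ℕ) :
    (U * D * star U) ^ k = U * D ^ k * star U := by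
  have hU' : star U * U = 1 := mul_eq_one_comm.mp hU
  induction k with
  | zero => rw [pow_zero, pow_zero, mul_one, hU]
  | succ k ih => rw [pow_succ, pow_succ, ih, conj_mul_conj _ _ _ hU']

lemma dot_pow_expand {Y : Matrix (Fin n) (Fin n) ℝ} (hY : Y.PosSemidef) (g : Fin n → ℝ)
    (k : ℕ) :
    g ⬝ᵥ (Y ^ k *ᵥ g) = ∑ i, hY.1.eigenvalues i ^ k
      * ((star (hY.1.eigenvectorUnitary : Matrix (Fin n) (Fin n) ℝ) *ᵥ g) i)^2 := by
  have hspec := hY.1.spectral_theorem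
  rw [ofReal_comp, Unitary.conjStarAlgAut_apply] at hspec
  conv_lhs => rw [hspec]
  rw [conj_pow _ _ (unitary_mul_star hY.1), Matrix.diagonal_pow, dot_conj_diag]
  rfl

lemma jensen_dot {Y : Matrix (Fin n) (Fin n) ℝ} (hY : Y.PosSemidef) (g : Fin n → ℝ)
    {u M : ℕ} (hu : 1 ≤ u) (huM : u ≤ M) :
    (g ⬝ᵥ (Y ^ u *ᵥ g)) ^ ((M:ℝ)/u) ≤ (g ⬝ᵥ g) ^ ((M:ℝ)/u - 1) * (g ⬝ᵥ (Y ^ M *ᵥ g)) := by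
  have hu0 : (0:ℝ) < u := by exact_mod_cast hu
  have hq : 1 ≤ (M:ℝ)/u := (one_le_div hu0).mpr (by exact_mod_cast huM)
  set c := star (hY.1.eigenvectorUnitary : Matrix (Fin n) (Fin n) ℝ) *ᵥ g with hc
  have hgg : g ⬝ᵥ g = ∑ i, (c i)^2 := by
    have h := dot_pow_expand hY g 0
    simpa using h
  have key := jensen_sum (p := fun i => (c i)^2) (z := fun i => hY.1.eigenvalues i ^ u)
    (fun i => sq_nonneg _) (fun i => pow_nonneg (hY.eigenvalues_nonneg i) u) hq
  have hzq : ∀ i, ((hY.1.eigenvalues i ^ u : ℝ)) ^ ((M:ℝ)/u) = hY.1.eigenvalues i ^ M := by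
    intro i
    rw [← Real.rpow_natCast (hY.1.eigenvalues i) u, ← Real.rpow_natCast (hY.1.eigenvalues i) M,
      ← Real.rpow_mul (hY.eigenvalues_nonneg i)]
    congr 1
    field_simp
  calc (g ⬝ᵥ (Y ^ u *ᵥ g)) ^ ((M:ℝ)/u)
      = (∑ i, (c i)^2 * hY.1.eigenvalues i ^ u) ^ ((M:ℝ)/u) := by
        rw [dot_pow_expand hY g u]
        congr 1
        exact Finset.sum_congr rfl fun i _ => by ring
    _ ≤ (∑ i, (c i)^2) ^ ((M:ℝ)/u - 1) * ∑ i, (c i)^2 * (hY.1.eigenvalues i ^ u) ^ ((M:ℝ)/u) :=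
        key
    _ = (g ⬝ᵥ g) ^ ((M:ℝ)/u - 1) * (g ⬝ᵥ (Y ^ M *ᵥ g)) := by
        rw [hgg, dot_pow_expand hY g M]
        congr 1
        exact Finset.sum_congr rfl fun i _ => by rw [hzq i]; ring


lemma trace_eq_sum_diag (A : Matrix (Fin n) (Fin n) ℝ) : A.trace = ∑ i, A i i := rfl

lemma posSemidef_smul {A : Matrix (Fin n) (Fin n) ℝ} (hA : A.PosSemidef) {c : ℝ}
    (hc : 0 ≤ c) : (c • A).PosSemidef := by
  exact hA.smul hc

lemma trace_nonneg_psd {A : Matrix (Fin n) (Fin n) ℝ} (hA : A.PosSemidef) : 0 ≤ A.trace := by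
  rw [trace_eq_sum_diag]
  apply Finset.sum_nonneg
  intro i _
  have h := hA.dotProduct_mulVec_nonneg (Pi.single i 1)
  have hs : star (Pi.single i 1 : Fin n → ℝ) = Pi.single i 1 := by
    funext j; simp [Pi.star_apply]
  rw [hs] at h
  simpa [dotProduct, Matrix.mulVec, Pi.single_apply] using h

lemma rpow_add_nonneg {x : ℝ} (hx : 0 ≤ x) {e e' : ℝ} (he : 0 ≤ e) (he' : 0 ≤ e') :
    x ^ (e + e') = x ^ e * x ^ e' := by
  rcases eq_or_ne (e + e') 0 with h0 | h0
  · have h1 : e = 0 := le_antisymm (by linarith) he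
    have h2 : e' = 0 := le_antisymm (by linarith) he'
    simp [h1, h2]
  · exact Real.rpow_add' hx h0

/-- trace of rpow of a square. -/
lemma trace_psdRpow_sq {W : Matrix (Fin n) (Fin n) ℝ} (hW : W.PosSemidef) (q : ℝ) :
    (psdRpow (W * W) (q/2)).trace = (psdRpow W q).trace := by
  set U := (hW.1.eigenvectorUnitary : Matrix (Fin n) (Fin n) ℝ)
  have hspec := hW.1.spectral_theorem
  rw [ofReal_comp, Unitary.conjStarAlgAut_apply] at hspec
  have hdec : W * W = U * Matrix.diagonal
      (fun i => hW.1.eigenvalues i * hW.1.eigenvalues i) * star U := by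
    conv_lhs => rw [hspec]
    rw [conj_mul_conj _ _ _ (mul_eq_one_comm.mp (unitary_mul_star hW.1)),
      Matrix.diagonal_mul_diagonal]
  rw [trace_psdRpow_decomp (unitary_mul_star hW.1)
    (fun i => mul_nonneg (hW.eigenvalues_nonneg i) (hW.eigenvalues_nonneg i)) hdec (q/2),
    trace_psdRpow_eigen hW]
  refine Finset.sum_congr rfl fun i _ => ?_
  have hl0 := hW.eigenvalues_nonneg i
  rw [show hW.1.eigenvalues i * hW.1.eigenvalues i = hW.1.eigenvalues i ^ ((2:ℕ):ℝ) by
    rw [Real.rpow_natCast]; ring]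
  rw [← Real.rpow_mul hl0]
  congr 1
  push_cast
  ring

lemma trace_psdRpow_matAbs (Z : Matrix (Fin n) (Fin n) ℝ) (q : ℝ) :
    (psdRpow (matAbs Z) q).trace = (psdRpow (Zᴴ * Z) (q/2)).trace := by
  have hFP : (matAbs Z).PosSemidef := matAbs_psd Z
  have hFF : matAbs Z * matAbs Z = Zᴴ * Z := matAbs_mul_self Z
  rw [← hFF, trace_psdRpow_sq hFP]

lemma trace_psdRpow_swap (N : Matrix (Fin n) (Fin n) ℝ) (s : ℝ) :
    (psdRpow (Nᴴ * N) s).trace = (psdRpow (N * Nᴴ) s).trace :=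
  trace_psdRpow_congr (Matrix.posSemidef_conjTranspose_mul_self N)
    (Matrix.posSemidef_self_mul_conjTranspose N) (charpoly_mul_comm Nᴴ N) s

/-- entry of a conjugated matrix as a quadratic form on the column. -/
lemma diag_conj_entry (C A' : Matrix (Fin n) (Fin n) ℝ) (i : Fin n) :
    (star A' * C * A') i i = (fun j => A' j i) ⬝ᵥ (C *ᵥ (fun j => A' j i)) := by
  simp only [Matrix.mul_apply, dotProduct, Matrix.mulVec, Matrix.star_apply,
    star_trivial, Finset.sum_mul, Finset.mul_sum]
  rw [Finset.sum_comm]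
  exact Finset.sum_congr rfl fun j _ => Finset.sum_congr rfl fun k _ => by ring

/-- Core Jensen trace inequality. -/
lemma core_jensen {X Y : Matrix (Fin n) (Fin n) ℝ} (hX : X.PosSemidef) (hY : Y.PosSemidef)
    {u M : ℕ} (hu : 1 ≤ u) (huM : u ≤ M)
    (hW : (psdRpow X (1/2) * Y ^ u * psdRpow X (1/2)).PosSemidef) :
    (psdRpow (psdRpow X (1/2) * Y ^ u * psdRpow X (1/2)) ((M:ℝ)/u)).trace
      ≤ opNorm X ^ ((M:ℝ)/u - 1) * (X * Y ^ M).trace := by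
  set q : ℝ := (M:ℝ)/u with hqdef
  have hu0 : (0:ℝ) < u := by exact_mod_cast hu
  have hq1 : 1 ≤ q := (one_le_div hu0).mpr (by exact_mod_cast huM)
  set R := psdRpow X (1/2) with hR
  have hRP : R.PosSemidef := psdRpow_posSemidef hX _
  have hRstar : star R = R := by rw [Matrix.star_eq_conjTranspose]; exact hRP.1
  have hRR : R * R = X := by
    rw [hR, psdRpow_mul hX (by norm_num) (by norm_num)]
    norm_num [psdRpow_one hX]
  set W := R * Y ^ u * R with hWdef
  set U := (hW.1.eigenvectorUnitary : Matrix (Fin n) (Fin n) ℝ) with hU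
  have hUU : star U * U = 1 := mul_eq_one_comm.mp (unitary_mul_star hW.1)
  have hUU' : U * star U = 1 := unitary_mul_star hW.1
  set G := R * U with hG
  have hGstar : star G = star U * R := by rw [hG, Matrix.star_mul, hRstar]
  have hdiagW := hW.1.conjStarAlgAut_star_eigenvectorUnitary
  rw [ofReal_comp, Unitary.conjStarAlgAut_star_apply] at hdiagW
  have hlam : ∀ i, hW.1.eigenvalues i
      = (fun j => G j i) ⬝ᵥ (Y ^ u *ᵥ (fun j => G j i)) := by
    intro i
    have h1 : star U * W * U = star G * (Y ^ u) * G := by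
      rw [hWdef, hG, hGstar]
      simp only [mul_assoc]
    have h2 : hW.1.eigenvalues i = (star U * W * U) i i := by
      rw [hdiagW, Matrix.diagonal_apply_eq]
    rw [h2, h1, diag_conj_entry]
  have hGG : star G * G = star U * X * U := by
    rw [hGstar, hG]
    rw [show star U * R * (R * U) = star U * (R * R) * U by simp only [mul_assoc], hRR]
  have hdot : ∀ i, (fun j => G j i) ⬝ᵥ (fun j => G j i) ≤ opNorm X := by
    intro i
    have h3 := diag_conj_entry 1 G i
    rw [mul_one, Matrix.one_mulVec] at h3
    have h4 : (fun j => G j i) ⬝ᵥ (fun j => G j i) = (star U * X * U) i i := by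
      rw [← h3, hGG]
    have h5 := diag_conj_entry 1 U i
    rw [mul_one, Matrix.one_mulVec] at h5
    have h6 : (fun j => U j i) ⬝ᵥ (fun j => U j i) = 1 := by
      rw [← h5, hUU, Matrix.one_apply_eq]
    rw [h4, diag_conj_entry X U i]
    calc (fun j => U j i) ⬝ᵥ (X *ᵥ fun j => U j i)
        ≤ opNorm X * ((fun j => U j i) ⬝ᵥ fun j => U j i) := rayleigh_le_opNorm X _
      _ = opNorm X := by rw [h6, mul_one]
  have hsum : ∑ i, (fun j => G j i) ⬝ᵥ (Y ^ M *ᵥ (fun j => G j i)) = (X * Y ^ M).trace := by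
    have h1 : ∑ i, (fun j => G j i) ⬝ᵥ (Y ^ M *ᵥ (fun j => G j i))
        = (star G * Y ^ M * G).trace := by
      rw [trace_eq_sum_diag]
      exact Finset.sum_congr rfl fun i _ => (diag_conj_entry (Y ^ M) G i).symm
    rw [h1, Matrix.trace_mul_cycle]
    have h2 : G * star G = X := by
      rw [hG, hGstar, show R * U * (star U * R) = R * (U * star U) * R by simp only [mul_assoc],
        hUU', mul_one, hRR]
    rw [show G * star G * Y ^ M = (G * star G) * Y ^ M from rfl, h2]
  rw [trace_psdRpow_eigen hW]
  have hterm : ∀ i, hW.1.eigenvalues i ^ q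
      ≤ opNorm X ^ (q - 1) * ((fun j => G j i) ⬝ᵥ (Y ^ M *ᵥ (fun j => G j i))) := by
    intro i
    have hYM0 : 0 ≤ (fun j => G j i) ⬝ᵥ (Y ^ M *ᵥ (fun j => G j i)) := by
      have h := (hY.pow M).dotProduct_mulVec_nonneg (fun j => G j i)
      have hs : star (fun j => G j i) = (fun j => G j i) := by funext j; simp
      rwa [hs] at h
    have hgg0 : 0 ≤ (fun j => G j i) ⬝ᵥ (fun j => G j i) :=
      Finset.sum_nonneg fun j _ => mul_self_nonneg _
    rw [hlam i]
    calc ((fun j => G j i) ⬝ᵥ (Y ^ u *ᵥ (fun j => G j i))) ^ q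
        ≤ ((fun j => G j i) ⬝ᵥ (fun j => G j i)) ^ (q - 1)
            * ((fun j => G j i) ⬝ᵥ (Y ^ M *ᵥ (fun j => G j i))) := jensen_dot hY _ hu huM
      _ ≤ opNorm X ^ (q - 1) * ((fun j => G j i) ⬝ᵥ (Y ^ M *ᵥ (fun j => G j i))) := by
          exact mul_le_mul_of_nonneg_right
            (Real.rpow_le_rpow hgg0 (hdot i) (by linarith)) hYM0
  calc ∑ i, hW.1.eigenvalues i ^ q
      ≤ ∑ i, opNorm X ^ (q - 1) * ((fun j => G j i) ⬝ᵥ (Y ^ M *ᵥ (fun j => G j i))) :=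
        Finset.sum_le_sum fun i _ => hterm i
    _ = opNorm X ^ (q - 1) * (X * Y ^ M).trace := by rw [← Finset.mul_sum, hsum]


end SFL
end

open SFL
open Matrix Polynomial

/-- For PSD matrices `X, Y` and natural numbers `1 ≤ u ≤ M`, `a, b ≥ 1`:
`|X^{a/2} Y^{u} X^{b/2}|_{M/u} ≤ ‖X‖^{(a+b)/2 - u/M} · (tr(X Y^M))^{u/M}`. -/
theorem schatten_norm_single_factor_le {n : ℕ} (a b u M : ℕ)
    (ha : 1 ≤ a) (hb : 1 ≤ b) (hu : 1 ≤ u) (hM : 1 ≤ M) (huM : u ≤ M)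
    (X Y : Matrix (Fin n) (Fin n) ℝ) (hX : X.PosSemidef) (hY : Y.PosSemidef) :
    schattenNorm ((M : ℝ) / u) (psdRpow X ((a : ℝ) / 2) * Y ^ u * psdRpow X ((b : ℝ) / 2))
      ≤ opNorm X ^ (((a : ℝ) + b) / 2 - (u : ℝ) / M)
          * (Matrix.trace (X * Y ^ M)) ^ ((u : ℝ) / M) := by
  have hu0 : (0:ℝ) < u := by exact_mod_cast hu
  have hM0 : (0:ℝ) < M := by exact_mod_cast hM
  set q : ℝ := (M:ℝ)/u with hq
  have hq0 : 0 < q := div_pos hM0 hu0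
  have hq1 : 1 ≤ q := (one_le_div hu0).mpr (by exact_mod_cast huM)
  have hq2 : (0:ℝ) ≤ q/2 := by positivity
  set κ := opNorm X with hκ
  have hκ0 : 0 ≤ κ := norm_nonneg _
  have ha1 : (1:ℝ) ≤ (a:ℝ) := by exact_mod_cast ha
  have hb1 : (1:ℝ) ≤ (b:ℝ) := by exact_mod_cast hb
  set R := psdRpow X (1/2 : ℝ) with hR
  have hRP : R.PosSemidef := psdRpow_posSemidef hX _
  have hRR : R * R = X := by
    rw [hR, psdRpow_mul hX (by norm_num) (by norm_num)]
    norm_num [psdRpow_one hX]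
  set Yu := Y ^ u with hYudef
  have hYu : Yu.PosSemidef := hY.pow u
  set Pa := psdRpow X ((a:ℝ)/2) with hPa
  set Pb := psdRpow X ((b:ℝ)/2) with hPb
  have hPaP : Pa.PosSemidef := psdRpow_posSemidef hX _
  have hPbP : Pb.PosSemidef := psdRpow_posSemidef hX _
  set Z := Pa * Yu * Pb with hZ
  have hZH : Zᴴ = Pb * Yu * Pa := by
    rw [hZ, Matrix.conjTranspose_mul, Matrix.conjTranspose_mul, hPaP.1, hPbP.1, hYu.1,
      ← mul_assoc]
  have hPA : Pa * Pa = psdRpow X (a:ℝ) := by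
    rw [hPa, psdRpow_mul hX (by positivity) (by positivity),
      show (a:ℝ)/2 + (a:ℝ)/2 = (a:ℝ) by ring]
  have hPB : Pb * Pb = psdRpow X (b:ℝ) := by
    rw [hPb, psdRpow_mul hX (by positivity) (by positivity),
      show (b:ℝ)/2 + (b:ℝ)/2 = (b:ℝ) by ring]
  have hZZpsd : (Zᴴ * Z).PosSemidef := Matrix.posSemidef_conjTranspose_mul_self Z
  -- step A
  set V₁ := Pb * Yu with hV₁
  have hV₁H : V₁ᴴ = Yu * Pb := by rw [hV₁, Matrix.conjTranspose_mul, hYu.1, hPbP.1]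
  have hstepA : Zᴴ * Z = V₁ * psdRpow X (a:ℝ) * V₁ᴴ := by
    rw [hZH, hZ, hV₁, hV₁H, ← hPA]
    simp only [mul_assoc]
  -- Loewner 1
  set κa := κ ^ ((a:ℝ) - 1) with hκa
  have hκa0 : 0 ≤ κa := Real.rpow_nonneg hκ0 _
  have hL1 : (κa • X - psdRpow X (a:ℝ)).PosSemidef := by
    have h := psdRpow_loewner hX (zero_le_one) ha1
    rwa [psdRpow_one hX] at h
  have hB1psd : (κa • (V₁ * X * V₁ᴴ)).PosSemidef :=
    posSemidef_smul (hX.mul_mul_conjTranspose_same V₁) hκa0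
  have hdiff1 : (κa • (V₁ * X * V₁ᴴ) - Zᴴ * Z).PosSemidef := by
    have heq : κa • (V₁ * X * V₁ᴴ) - Zᴴ * Z
        = V₁ * (κa • X - psdRpow X (a:ℝ)) * V₁ᴴ := by
      rw [hstepA, Matrix.mul_sub, Matrix.sub_mul, mul_smul_comm, smul_mul_assoc]
    rw [heq]
    exact hL1.mul_mul_conjTranspose_same V₁
  have hm1 : (psdRpow (Zᴴ * Z) (q/2)).trace
      ≤ κa ^ (q/2) * (psdRpow (V₁ * X * V₁ᴴ) (q/2)).trace := by
    have h := trace_psdRpow_mono hZZpsd hB1psd hdiff1 hq2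
    rwa [trace_psdRpow_smul (hX.mul_mul_conjTranspose_same V₁) hκa0] at h
  -- swap 1
  set N₁ := V₁ * R with hN₁
  have hN₁H : N₁ᴴ = R * V₁ᴴ := by rw [hN₁, Matrix.conjTranspose_mul, hRP.1]
  have hsw1 : V₁ * X * V₁ᴴ = N₁ * N₁ᴴ := by
    rw [hN₁, hN₁H, ← hRR]; simp only [mul_assoc]
  have hswap1 : (psdRpow (V₁ * X * V₁ᴴ) (q/2)).trace
      = (psdRpow (N₁ᴴ * N₁) (q/2)).trace := by
    rw [hsw1, ← trace_psdRpow_swap]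
  -- step B
  set V₂ := R * Yu with hV₂
  have hV₂H : V₂ᴴ = Yu * R := by rw [hV₂, Matrix.conjTranspose_mul, hYu.1, hRP.1]
  have hstepB : N₁ᴴ * N₁ = V₂ * psdRpow X (b:ℝ) * V₂ᴴ := by
    rw [hN₁H, hN₁, hV₂, hV₂H, hV₁, hV₁H, ← hPB]
    simp only [mul_assoc]
  set κb := κ ^ ((b:ℝ) - 1) with hκb
  have hκb0 : 0 ≤ κb := Real.rpow_nonneg hκ0 _
  have hL2 : (κb • X - psdRpow X (b:ℝ)).PosSemidef := by
    have h := psdRpow_loewner hX (zero_le_one) hb1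
    rwa [psdRpow_one hX] at h
  have hN₁N₁psd : (N₁ᴴ * N₁).PosSemidef := Matrix.posSemidef_conjTranspose_mul_self N₁
  have hB2psd : (κb • (V₂ * X * V₂ᴴ)).PosSemidef :=
    posSemidef_smul (hX.mul_mul_conjTranspose_same V₂) hκb0
  have hdiff2 : (κb • (V₂ * X * V₂ᴴ) - N₁ᴴ * N₁).PosSemidef := by
    have heq : κb • (V₂ * X * V₂ᴴ) - N₁ᴴ * N₁
        = V₂ * (κb • X - psdRpow X (b:ℝ)) * V₂ᴴ := by
      rw [hstepB, Matrix.mul_sub, Matrix.sub_mul, mul_smul_comm, smul_mul_assoc]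
    rw [heq]
    exact hL2.mul_mul_conjTranspose_same V₂
  have hm2 : (psdRpow (N₁ᴴ * N₁) (q/2)).trace
      ≤ κb ^ (q/2) * (psdRpow (V₂ * X * V₂ᴴ) (q/2)).trace := by
    have h := trace_psdRpow_mono hN₁N₁psd hB2psd hdiff2 hq2
    rwa [trace_psdRpow_smul (hX.mul_mul_conjTranspose_same V₂) hκb0] at h
  -- W
  have hWpsd : (R * Yu * R).PosSemidef := by
    have h := hYu.mul_mul_conjTranspose_same R
    rwa [hRP.1] at h
  have hsw2 : V₂ * X * V₂ᴴ = (R * Yu * R) * (R * Yu * R) := by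
    rw [hV₂, hV₂H, ← hRR]; simp only [mul_assoc]
  have hWW : (psdRpow (V₂ * X * V₂ᴴ) (q/2)).trace = (psdRpow (R * Yu * R) q).trace := by
    rw [hsw2, trace_psdRpow_sq hWpsd]
  have hcore : (psdRpow (R * Yu * R) q).trace ≤ κ ^ (q - 1) * (X * Y ^ M).trace :=
    core_jensen hX hY hu huM hWpsd
  -- numeric exponent collapse
  have he₁ : (0:ℝ) ≤ ((a:ℝ) - 1) * (q/2) := mul_nonneg (by linarith) hq2
  have he₂ : (0:ℝ) ≤ ((b:ℝ) - 1) * (q/2) := mul_nonneg (by linarith) hq2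
  have he₃ : (0:ℝ) ≤ q - 1 := by linarith
  have hE : κa ^ (q/2) * (κb ^ (q/2) * κ ^ (q - 1)) = κ ^ (q * (((a:ℝ)+b)/2) - 1) := by
    rw [hκa, hκb, ← Real.rpow_mul hκ0, ← Real.rpow_mul hκ0,
      ← rpow_add_nonneg hκ0 he₂ he₃, ← rpow_add_nonneg hκ0 he₁ (by linarith)]
    congr 1
    ring
  have chain : (psdRpow (matAbs Z) q).trace
      ≤ κ ^ (q * (((a:ℝ)+b)/2) - 1) * (X * Y ^ M).trace := by
    calc (psdRpow (matAbs Z) q).trace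
        = (psdRpow (Zᴴ * Z) (q/2)).trace := trace_psdRpow_matAbs Z q
      _ ≤ κa ^ (q/2) * (psdRpow (V₁ * X * V₁ᴴ) (q/2)).trace := hm1
      _ = κa ^ (q/2) * (psdRpow (N₁ᴴ * N₁) (q/2)).trace := by rw [hswap1]
      _ ≤ κa ^ (q/2) * (κb ^ (q/2) * (psdRpow (V₂ * X * V₂ᴴ) (q/2)).trace) :=
          mul_le_mul_of_nonneg_left hm2 (Real.rpow_nonneg hκa0 _)
      _ = κa ^ (q/2) * (κb ^ (q/2) * (psdRpow (R * Yu * R) q).trace) := by rw [hWW]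
      _ ≤ κa ^ (q/2) * (κb ^ (q/2) * (κ ^ (q - 1) * (X * Y ^ M).trace)) := by
          apply mul_le_mul_of_nonneg_left _ (Real.rpow_nonneg hκa0 _)
          exact mul_le_mul_of_nonneg_left hcore (Real.rpow_nonneg hκb0 _)
      _ = κ ^ (q * (((a:ℝ)+b)/2) - 1) * (X * Y ^ M).trace := by
          rw [show κa ^ (q/2) * (κb ^ (q/2) * (κ ^ (q - 1) * (X * Y ^ M).trace))
            = (κa ^ (q/2) * (κb ^ (q/2) * κ ^ (q - 1))) * (X * Y ^ M).trace by ring, hE]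
  -- final
  have hmabs : (matAbs Z).PosSemidef := matAbs_psd Z
  have ht0 : 0 ≤ (psdRpow (matAbs Z) q).trace := by
    rw [trace_psdRpow_eigen hmabs]
    exact Finset.sum_nonneg fun i _ => Real.rpow_nonneg (hmabs.eigenvalues_nonneg i) q
  have htr0 : 0 ≤ (X * Y ^ M).trace := by
    have h1 : (X * Y ^ M).trace = (R * Y ^ M * R).trace := by
      rw [← hRR, ← Matrix.trace_mul_cycle R (Y ^ M) R]
    rw [h1]
    apply trace_nonneg_psd
    have h := (hY.pow M).mul_mul_conjTranspose_same R
    rwa [hRP.1] at h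
  rw [schattenNorm]
  have hfinal := Real.rpow_le_rpow ht0 chain (le_of_lt (by positivity : (0:ℝ) < 1/q))
  rw [Real.mul_rpow (Real.rpow_nonneg hκ0 _) htr0, ← Real.rpow_mul hκ0] at hfinal
  have hEq : (q * (((a:ℝ)+b)/2) - 1) * (1/q) = ((a:ℝ)+b)/2 - (u:ℝ)/M := by
    rw [hq]
    field_simp
  have h1q : (1:ℝ)/q = (u:ℝ)/M := by rw [hq, one_div_div]
  rw [hEq, h1q] at hfinal
  rw [h1q]
  exact hfinal
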